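/- arXiv:1005.3178 — 2 statements merged into one kernel-verified Lean document; each statement's English description precedes it below -/
import Mathlib

section
/- Let K be a pathwise connected poset and o ∈ K. The assignment sending a C*-net bundle (A,j)_K to its holonomy dynamical system (A_o, π₁ᵒ(K), j_*) is a correspondence that is bijective up to isomorphism between C*-net bundles over K and C*-dynamical systems with group π₁ᵒ(K); in particular, it extends to an equivalence between the category of C*-net bundles over K (with morphisms over the identity of K) and the category of C*-dynamical systems with group π₁ᵒ(K) (with morphisms having identity group part). -/
noncomputable section

universe u v w u' v' w' u'' v'' w''

namespace AQFT

/-! ### Simplices and paths in a poset -/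

structure Simplex1 (K : Type u) [PartialOrder K] : Type u where
  supp : K
  d0 : K
  d1 : K
  le0 : d0 ≤ supp
  le1 : d1 ≤ supp

namespace Simplex1

variable {K : Type u} [PartialOrder K]

def op (s : Simplex1 K) : Simplex1 K := ⟨s.supp, s.d1, s.d0, s.le1, s.le0⟩

def deg (a : K) : Simplex1 K := ⟨a, a, a, le_rfl, le_rfl⟩

def map {L : Type u'} [PartialOrder L] (f : K →o L) (s : Simplex1 K) : Simplex1 L :=
  ⟨f s.supp, f s.d0, f s.d1, f.monotone s.le0, f.monotone s.le1⟩

end Simplex1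

structure Simplex2 (K : Type u) [PartialOrder K] : Type u where
  supp : K
  d0 : Simplex1 K
  d1 : Simplex1 K
  d2 : Simplex1 K
  le0 : d0.supp ≤ supp
  le1 : d1.supp ≤ supp
  le2 : d2.supp ≤ supp
  h00 : d0.d0 = d1.d0
  h11 : d1.d1 = d2.d1
  h10 : d0.d1 = d2.d0

inductive SPath (K : Type u) [PartialOrder K] : K → K → Type u
  | nil (a : K) : SPath K a a
  | cons {a b c : K} (p : SPath K a b) (s : Simplex1 K) (h1 : s.d1 = b) (h0 : s.d0 = c) :
      SPath K a c

namespace SPath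

variable {K : Type u} [PartialOrder K]

/-- The path consisting of a single 1-simplex. -/
def single {a b : K} (s : Simplex1 K) (h1 : s.d1 = a) (h0 : s.d0 = b) : SPath K a b :=
  .cons (.nil a) s h1 h0

/-- Composition of paths: first traverse `p`, then `q`. -/
def comp {a b : K} (p : SPath K a b) : {c : K} → SPath K b c → SPath K a c
  | _, .nil _ => p
  | _, .cons q s h1 h0 => .cons (p.comp q) s h1 h0

/-- The opposite (reverse) of a path. -/
def reverse {a : K} : {b : K} → SPath K a b → SPath K b a
  | _, .nil _ => .nil a
  | _, .cons p s h1 h0 => (single s.op h0 h1).comp p.reverse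

@[simp] theorem comp_nil {a b : K} (p : SPath K a b) : p.comp (.nil b) = p := rfl

@[simp] theorem nil_comp {a b : K} (p : SPath K a b) : (SPath.nil a).comp p = p := by
  induction p with
  | nil => rfl
  | cons p s h1 h0 ih =>
      show SPath.cons ((SPath.nil _).comp p) s h1 h0 = _
      rw [ih]

theorem comp_assoc {a b c d : K} (p : SPath K a b) (q : SPath K b c) (r : SPath K c d) :
    (p.comp q).comp r = p.comp (q.comp r) := by
  induction r with
  | nil => rfl
  | cons r s h1 h0 ih =>
      show SPath.cons ((p.comp q).comp r) s h1 h0 = SPath.cons (p.comp (q.comp r)) s h1 h0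
      rw [ih]

/-- All 1-simplices of the path have support `≤ o`. -/
def SuppLE (o : K) {a : K} : {b : K} → SPath K a b → Prop
  | _, .nil _ => True
  | _, .cons p s _ _ => SuppLE o p ∧ s.supp ≤ o

/-- All supports and faces of the path belong to `P`. -/
def MemAll (P : Set K) {a : K} : {b : K} → SPath K a b → Prop
  | _, .nil _ => True
  | _, .cons p s _ _ => MemAll P p ∧ s.supp ∈ P ∧ s.d0 ∈ P ∧ s.d1 ∈ P

theorem SuppLE.comp {o : K} {a b c : K} {p : SPath K a b} {q : SPath K b c}
    (hp : SuppLE o p) (hq : SuppLE o q) : SuppLE o (p.comp q) := by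
  induction q with
  | nil => exact hp
  | cons q s h1 h0 ih => exact ⟨ih hq.1, hq.2⟩

theorem SuppLE.reverse {o : K} {a b : K} {p : SPath K a b} (hp : SuppLE o p) :
    SuppLE o p.reverse := by
  induction p with
  | nil => trivial
  | cons p s h1 h0 ih => exact SuppLE.comp ⟨trivial, hp.2⟩ (ih hp.1)

/-- Mapping paths along a monotone map. -/
def map {L : Type u'} [PartialOrder L] (f : K →o L) {a : K} :
    {b : K} → SPath K a b → SPath L (f a) (f b)
  | _, .nil _ => .nil (f a)
  | _, .cons p s h1 h0 => .cons (map f p) (s.map f) (congrArg f h1) (congrArg f h0)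

/-- The path of the nerve 1-simplex associated with an inclusion `o ≤ a`. -/
def nervePath {o a : K} (h : o ≤ a) : SPath K o a :=
  single ⟨a, a, o, le_rfl, h⟩ rfl rfl

/-! ### Homotopy of paths -/

inductive Homotopic : {a b : K} → SPath K a b → SPath K a b → Prop
  | refl {a b : K} (p : SPath K a b) : Homotopic p p
  | symm {a b : K} {p q : SPath K a b} : Homotopic p q → Homotopic q p
  | trans {a b : K} {p q r : SPath K a b} : Homotopic p q → Homotopic q r → Homotopic p r
  | comp_congr {a b c : K} {p p' : SPath K a b} {q q' : SPath K b c} :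
      Homotopic p p' → Homotopic q q' → Homotopic (p.comp q) (p'.comp q')
  | degen {a : K} (s : Simplex1 K) (h0 : s.d0 = a) (h1 : s.d1 = a) (hs : s.supp = a) :
      Homotopic (SPath.nil a) (single s h1 h0)
  | triangle {a b : K} (c : Simplex2 K) (h1 : c.d2.d1 = a) (h0 : c.d0.d0 = b) :
      Homotopic ((single c.d2 h1 rfl).comp (single c.d0 c.h10 h0))
        (single c.d1 (c.h11.trans h1) (c.h00.symm.trans h0))

theorem single_comp_op {a b : K} (s : Simplex1 K) (h1 : s.d1 = a) (h0 : s.d0 = b) :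
    Homotopic ((single s h1 h0).comp (single s.op h0 h1)) (SPath.nil a) := by
  subst h1; subst h0
  have ht := Homotopic.triangle
    (⟨s.supp, s.op, Simplex1.deg s.d1, s, le_rfl, s.le1, le_rfl, rfl, rfl, rfl⟩ : Simplex2 K)
    rfl rfl
  have hd := Homotopic.degen (K := K) (Simplex1.deg s.d1) rfl rfl rfl
  exact ht.trans hd.symm

theorem comp_reverse_self {a b : K} (p : SPath K a b) :
    Homotopic (p.comp p.reverse) (SPath.nil a) := by
  induction p with
  | nil => exact .refl _
  | cons p s h1 h0 ih =>
      show Homotopic ((p.comp (single s h1 h0)).comp ((single s.op h0 h1).comp p.reverse)) _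
      rw [comp_assoc, ← comp_assoc (single s h1 h0)]
      have h2 : Homotopic (((single s h1 h0).comp (single s.op h0 h1)).comp p.reverse)
          p.reverse := by
        have h3 := Homotopic.comp_congr (single_comp_op s h1 h0) (Homotopic.refl p.reverse)
        rwa [nil_comp] at h3
      exact (Homotopic.comp_congr (Homotopic.refl p) h2).trans ih

theorem reverse_comp_self {a b : K} (p : SPath K a b) :
    Homotopic (p.reverse.comp p) (SPath.nil b) := by
  induction p with
  | nil => exact .refl _
  | cons p s h1 h0 ih =>
      show Homotopic (((single s.op h0 h1).comp p.reverse).comp (p.comp (single s h1 h0))) _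
      rw [comp_assoc, ← comp_assoc p.reverse]
      have h2 : Homotopic ((p.reverse.comp p).comp (single s h1 h0)) (single s h1 h0) := by
        have h3 := Homotopic.comp_congr ih (Homotopic.refl (single s h1 h0))
        rwa [nil_comp] at h3
      have h4 : Homotopic ((single s.op h0 h1).comp ((p.reverse.comp p).comp (single s h1 h0)))
          ((single s.op h0 h1).comp (single s h1 h0)) :=
        Homotopic.comp_congr (Homotopic.refl _) h2
      exact h4.trans (single_comp_op s.op h0 h1)

theorem Homotopic.reverse_congr {a b : K} {p q : SPath K a b} (h : Homotopic p q) :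
    Homotopic p.reverse q.reverse := by
  have e1 : Homotopic p.reverse (p.reverse.comp (q.comp q.reverse)) :=
    Homotopic.comp_congr (Homotopic.refl p.reverse) (comp_reverse_self q).symm
  have e2 : Homotopic (p.reverse.comp (q.comp q.reverse)) ((p.reverse.comp p).comp q.reverse) := by
    rw [comp_assoc]
    exact Homotopic.comp_congr (Homotopic.refl _)
      (Homotopic.comp_congr h.symm (Homotopic.refl _))
  have e3 : Homotopic ((p.reverse.comp p).comp q.reverse) q.reverse := by
    have h3 := Homotopic.comp_congr (reverse_comp_self p) (Homotopic.refl q.reverse)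
    rwa [nil_comp] at h3
  exact (e1.trans e2).trans e3

end SPath

/-! ### The fundamental group of a poset -/

instance homotopySetoid (K : Type u) [PartialOrder K] (o : K) : Setoid (SPath K o o) where
  r := SPath.Homotopic
  iseqv := ⟨fun p => .refl p, fun h => h.symm, fun h h' => h.trans h'⟩

def Pi1 (K : Type u) [PartialOrder K] (o : K) : Type u := Quotient (homotopySetoid K o)

namespace Pi1

variable {K : Type u} [PartialOrder K] {o : K}

def mk (p : SPath K o o) : Pi1 K o := Quotient.mk _ p

instance : One (Pi1 K o) := ⟨mk (SPath.nil o)⟩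

instance : Mul (Pi1 K o) :=
  ⟨Quotient.map₂ (fun p q => q.comp p)
    (fun _ _ hp _ _ hq => SPath.Homotopic.comp_congr hq hp)⟩

instance : Inv (Pi1 K o) :=
  ⟨Quotient.map SPath.reverse (fun _ _ h => h.reverse_congr)⟩

instance : Group (Pi1 K o) where
  mul_assoc x y z := by
    refine Quotient.inductionOn₃ x y z ?_
    intro p q r
    show mk (r.comp (q.comp p)) = mk ((r.comp q).comp p)
    rw [SPath.comp_assoc]
  one_mul x := Quotient.inductionOn x fun p => rfl
  mul_one x := Quotient.inductionOn x fun p => congrArg mk (SPath.nil_comp p)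
  inv_mul_cancel x := Quotient.inductionOn x fun p => Quotient.sound (SPath.comp_reverse_self p)

end Pi1

/-! ### Nets of C*-algebras over a poset -/

open scoped ComplexOrder

variable {K : Type u} [PartialOrder K]

structure CStarNet (K : Type u) [PartialOrder K] where
  fib : K → Type v
  [cstar : ∀ o, CStarAlgebra (fib o)]
  incl : ∀ ⦃a o : K⦄, a ≤ o → (fib a →⋆ₐ[ℂ] fib o)
  incl_injective : ∀ ⦃a o : K⦄ (h : a ≤ o), Function.Injective (incl h)
  incl_comp : ∀ ⦃e a o : K⦄ (h1 : e ≤ a) (h2 : a ≤ o) (x : fib e),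
      incl h2 (incl h1 x) = incl (h1.trans h2) x

attribute [instance] CStarNet.cstar

/-- A C*-net bundle: all the inclusion maps are isomorphisms. -/
def IsCStarNetBundle (N : CStarNet.{u, v} K) : Prop :=
  ∀ ⦃a o : K⦄ (h : a ≤ o), Function.Bijective (N.incl h)

/-- Morphisms of nets over (possibly) different posets, over the poset map `f`. -/
def IsNetMorphism {K : Type u} {S : Type u'} [PartialOrder K] [PartialOrder S]
    (N : CStarNet.{u, v} K) (M : CStarNet.{u', v'} S) (f : K →o S)
    (φ : ∀ o : K, N.fib o →⋆ₐ[ℂ] M.fib (f o)) : Prop :=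
  ∀ ⦃a o : K⦄ (h : a ≤ o) (x : N.fib a), φ o (N.incl h x) = M.incl (f.monotone h) (φ a x)

/-- Morphisms of nets over the same poset (over the identity of the poset). -/
def IsNetMorphismOver (N : CStarNet.{u, v} K) (M : CStarNet.{u, v'} K)
    (φ : ∀ o : K, N.fib o →⋆ₐ[ℂ] M.fib o) : Prop :=
  ∀ ⦃a o : K⦄ (h : a ≤ o) (x : N.fib a), φ o (N.incl h x) = M.incl h (φ a x)

namespace CStarNet

def fibCast (N : CStarNet.{u, v} K) {a b : K} (h : a = b) : N.fib a ≃⋆ₐ[ℂ] N.fib b := by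
  subst h; exact StarAlgEquiv.refl ℂ _

/-- The isomorphism determined by an inclusion map of a C*-net bundle. -/
def holEquiv (N : CStarNet.{u, v} K) (hN : IsCStarNetBundle N) ⦃a o : K⦄ (h : a ≤ o) :
    N.fib a ≃⋆ₐ[ℂ] N.fib o :=
  StarAlgEquiv.ofBijective (N.incl h) (hN h)

/-- The 1-cocycle `j_b` associated with a 1-simplex `b` of the poset. -/
def hol1 (N : CStarNet.{u, v} K) (hN : IsCStarNetBundle N) (s : Simplex1 K) :
    N.fib s.d1 ≃⋆ₐ[ℂ] N.fib s.d0 :=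
  (N.holEquiv hN s.le1).trans (N.holEquiv hN s.le0).symm

/-- The extension `j_p` of the 1-cocycle from 1-simplices to paths. -/
def holPath (N : CStarNet.{u, v} K) (hN : IsCStarNetBundle N) {a : K} :
    {b : K} → SPath K a b → (N.fib a ≃⋆ₐ[ℂ] N.fib b)
  | _, .nil _ => StarAlgEquiv.refl ℂ _
  | _, .cons p s h1 h0 =>
      (holPath N hN p).trans (((N.fibCast h1.symm).trans (N.hol1 hN s)).trans (N.fibCast h0))

end CStarNet

/-- A net is trivial if it is isomorphic to a constant net bundle. -/
def IsTrivialNet (N : CStarNet.{u, v} K) : Prop :=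
  ∀ o₀ : K, ∃ τ : ∀ a, N.fib a ≃⋆ₐ[ℂ] N.fib o₀,
    ∀ ⦃a o : K⦄ (h : a ≤ o) (x : N.fib a), τ o (N.incl h x) = τ a x

/-- `(NB, ε)` is an enveloping net bundle of the net `N`. -/
def IsEnvelope (N : CStarNet.{u, v} K) (NB : CStarNet.{u, max u v} K)
    (ε : ∀ o, N.fib o →⋆ₐ[ℂ] NB.fib o) : Prop :=
  IsCStarNetBundle NB ∧ IsNetMorphismOver N NB ε ∧
    ∀ (M : CStarNet.{u, max u v} K), IsCStarNetBundle M →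
      ∀ ψ : ∀ o, N.fib o →⋆ₐ[ℂ] M.fib o, IsNetMorphismOver N M ψ →
        ∃! ψu : ∀ o, NB.fib o →⋆ₐ[ℂ] M.fib o,
          IsNetMorphismOver NB M ψu ∧ ∀ o x, ψu o (ε o x) = ψ o x

/-- The net `N` is nondegenerate w.r.t. the enveloping net bundle `NB`. -/
def IsNondegenerate (NB : CStarNet.{u, v'} K) : Prop :=
  ∀ o : K, Nontrivial (NB.fib o)

/-! ### States -/

/-- A state on a unital C*-algebra. -/
structure CStarAlgState (A : Type v) [CStarAlgebra A] where
  lin : A →ₗ[ℂ] ℂ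
  map_one : lin 1 = 1
  pos : ∀ a : A, 0 ≤ lin (star a * a)

/-- A state on a net of C*-algebras. -/
structure NetState (N : CStarNet.{u, v} K) where
  st : ∀ o, CStarAlgState (N.fib o)
  compat : ∀ ⦃o a : K⦄ (h : o ≤ a) (x : N.fib o), (st a).lin (N.incl h x) = (st o).lin x

/-! ### Representations -/

structure NetRep (N : CStarNet.{u, v} K) where
  H : K → Type w
  [nacg : ∀ o, NormedAddCommGroup (H o)]
  [ips : ∀ o, InnerProductSpace ℂ (H o)]
  [cpl : ∀ o, CompleteSpace (H o)]
  rep : ∀ o, N.fib o →⋆ₐ[ℂ] (H o →L[ℂ] H o)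
  U : ∀ ⦃o a : K⦄, o ≤ a → (H o ≃ₗᵢ[ℂ] H a)
  intertwine : ∀ ⦃o a : K⦄ (h : o ≤ a) (x : N.fib o) (v : H o),
      U h (rep o x v) = rep a (N.incl h x) (U h v)
  U_comp : ∀ ⦃o a e : K⦄ (h1 : o ≤ a) (h2 : a ≤ e) (v : H o),
      U h2 (U h1 v) = U (h1.trans h2) v

attribute [instance] NetRep.nacg NetRep.ips NetRep.cpl

namespace NetRep

variable {N : CStarNet.{u, v} K}

def hCast (R : NetRep.{u, v, w} N) {a b : K} (h : a = b) : R.H a ≃ₗᵢ[ℂ] R.H b := by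
  subst h; exact LinearIsometryEquiv.refl ℂ _

/-- The unitary `U_b` associated with a 1-simplex `b`. -/
def U1 (R : NetRep.{u, v, w} N) (s : Simplex1 K) : R.H s.d1 ≃ₗᵢ[ℂ] R.H s.d0 :=
  (R.U s.le1).trans (R.U s.le0).symm

/-- The unitary `U_p` associated with a path `p`. -/
def Upath (R : NetRep.{u, v, w} N) {a : K} : {b : K} → SPath K a b → (R.H a ≃ₗᵢ[ℂ] R.H b)
  | _, .nil _ => LinearIsometryEquiv.refl ℂ _
  | _, .cons p s h1 h0 =>
      (Upath R p).trans (((R.hCast h1.symm).trans (R.U1 s)).trans (R.hCast h0))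

/-- A representation is faithful if all the `π_o` are injective. -/
def Faithful (R : NetRep.{u, v, w} N) : Prop := ∀ o, Function.Injective (R.rep o)

/-- A representation vanishes if all the `π_o` are zero. -/
def Vanishes (R : NetRep.{u, v, w} N) : Prop := ∀ (o) (x : N.fib o), R.rep o x = 0

/-- Quasi (topologically) trivial representation: the loop unitaries commute with the
representation of the corresponding fibre. -/
def QuasiTrivial (R : NetRep.{u, v, w} N) : Prop :=
  ∀ (o : K) (p : SPath K o o) (x : N.fib o) (v : R.H o),
    R.Upath p (R.rep o x v) = R.rep o x (R.Upath p v)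

/-- Unitary equivalence of representations. -/
def Equiv (R : NetRep.{u, v, w} N) (R' : NetRep.{u, v, w'} N) : Prop :=
  ∃ T : ∀ o, R.H o ≃ₗᵢ[ℂ] R'.H o,
    (∀ (o) (x : N.fib o) (v : R.H o), T o (R.rep o x v) = R'.rep o x (T o v)) ∧
    (∀ ⦃o a : K⦄ (h : o ≤ a) (v : R.H o), T a (R.U h v) = R'.U h (T o v))

end NetRep

/-- The representation of `N` obtained by composing a representation of `NB` with
a morphism `ε : N → NB` of nets over `K`. -/
def NetRep.ofEnvelope {N : CStarNet.{u, v} K} {NB : CStarNet.{u, v'} K}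
    (ε : ∀ o, N.fib o →⋆ₐ[ℂ] NB.fib o) (hε : IsNetMorphismOver N NB ε)
    (R : NetRep.{u, v', w} NB) : NetRep.{u, v, w} N where
  H := R.H
  rep o := (R.rep o).comp (ε o)
  U := R.U
  intertwine := by
    intro o a h x v
    show R.U h (R.rep o (ε o x) v) = R.rep a (ε a (N.incl h x)) (R.U h v)
    rw [hε h x]
    exact R.intertwine h (ε o x) v
  U_comp := R.U_comp

/-- Covariant representations of the holonomy dynamical system of a C*-net bundle,
with the action of the fundamental group presented at the level of loops. -/
structure CovRep (N : CStarNet.{u, v} K) (hN : IsCStarNetBundle N) (o : K) where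
  H : Type w
  [nacg : NormedAddCommGroup H]
  [ips : InnerProductSpace ℂ H]
  [cpl : CompleteSpace H]
  eta : N.fib o →⋆ₐ[ℂ] (H →L[ℂ] H)
  V : SPath K o o → (H ≃ₗᵢ[ℂ] H)
  V_hom : ∀ p q : SPath K o o, SPath.Homotopic p q → V p = V q
  V_mul : ∀ p q : SPath K o o, V (p.comp q) = (V p).trans (V q)
  cov : ∀ (p : SPath K o o) (x : N.fib o) (v : H),
      eta (N.holPath hN p x) (V p v) = V p (eta x v)

attribute [instance] CovRep.nacg CovRep.ips CovRep.cpl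

/-- Equivalence of covariant representations. -/
def CovRep.Equiv {N : CStarNet.{u, v} K} {hN : IsCStarNetBundle N} {o : K}
    (C : CovRep.{u, v, w} N hN o) (C' : CovRep.{u, v, w'} N hN o) : Prop :=
  ∃ W : C.H ≃ₗᵢ[ℂ] C'.H,
    (∀ (x : N.fib o) (v : C.H), W (C.eta x v) = C'.eta x (W v)) ∧
    (∀ (p : SPath K o o) (v : C.H), W (C.V p v) = C'.V p (W v))

/-- A representation of a single C*-algebra on a Hilbert space. -/
structure AlgRep (A : Type v) [CStarAlgebra A] where
  H : Type w
  [nacg : NormedAddCommGroup H]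
  [ips : InnerProductSpace ℂ H]
  [cpl : CompleteSpace H]
  rho : A →⋆ₐ[ℂ] (H →L[ℂ] H)

attribute [instance] AlgRep.nacg AlgRep.ips AlgRep.cpl

/-- A Hilbert space representation (on a single Hilbert space) of the restriction of
a net of C*-algebras to a subset `P` of the poset. -/
structure SubNetHSRep (N : CStarNet.{u, v} K) (P : Set K) where
  H : Type w
  [nacg : NormedAddCommGroup H]
  [ips : InnerProductSpace ℂ H]
  [cpl : CompleteSpace H]
  rep : ∀ o ∈ P, N.fib o →⋆ₐ[ℂ] (H →L[ℂ] H)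
  compat : ∀ ⦃a o : K⦄ (ha : a ∈ P) (ho : o ∈ P) (h : a ≤ o) (x : N.fib a),
      rep o ho (N.incl h x) = rep a ha x

attribute [instance] SubNetHSRep.nacg SubNetHSRep.ips SubNetHSRep.cpl

/-! ### Amenability -/

/-- The space `ℓ∞(G)` of bounded real-valued functions on `G`. -/
def BddFuns (G : Type w) : Submodule ℝ (G → ℝ) where
  carrier := {f | ∃ C, ∀ g, |f g| ≤ C}
  add_mem' := by
    rintro f g ⟨C, hC⟩ ⟨D, hD⟩
    exact ⟨C + D, fun x => (abs_add_le _ _).trans (add_le_add (hC x) (hD x))⟩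
  zero_mem' := ⟨0, by simp⟩
  smul_mem' := by
    rintro c f ⟨C, hC⟩
    refine ⟨|c| * C, fun x => ?_⟩
    have : |c • f x| = |c| * |f x| := by simp [abs_mul]
    calc |(c • f) x| = |c| * |f x| := by simpa using this
      _ ≤ |c| * C := mul_le_mul_of_nonneg_left (hC x) (abs_nonneg c)

def BddFuns.const (G : Type w) (r : ℝ) : BddFuns G :=
  ⟨fun _ => r, ⟨|r|, fun _ => le_rfl⟩⟩

def BddFuns.rtrans {G : Type w} [Group G] (f : BddFuns G) (h : G) : BddFuns G :=
  ⟨fun g => (f : G → ℝ) (g * h), by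
    obtain ⟨C, hC⟩ := f.2
    exact ⟨C, fun g => hC (g * h)⟩⟩

/-- A right invariant mean on `ℓ∞(G)`. -/
structure RightInvariantMean (G : Type w) [Group G] where
  mean : BddFuns G →ₗ[ℝ] ℝ
  nonneg : ∀ f : BddFuns G, (∀ g, 0 ≤ (f : G → ℝ) g) → 0 ≤ mean f
  normalized : mean (BddFuns.const G 1) = 1
  rightInv : ∀ (f : BddFuns G) (h : G), mean (BddFuns.rtrans f h) = mean f

/-- Amenability of a (discrete) group. -/
def IsAmenable (G : Type w) [Group G] : Prop := Nonempty (RightInvariantMean G)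

/-! ### Covariant nets -/

/-- A `G`-covariant structure on a net of C*-algebras, where `G` acts on the poset `K`
by order preserving bijections. -/
structure CovariantNet {G : Type w} [Group G] [MulAction G K]
    (hord : ∀ (g : G) (a b : K), a ≤ b → g • a ≤ g • b) (N : CStarNet.{u, v} K) where
  act : ∀ (g : G) (o : K), N.fib o ≃⋆ₐ[ℂ] N.fib (g • o)
  act_mul : ∀ (g h : G) (o : K) (x : N.fib o),
      N.fibCast (mul_smul h g o) (act (h * g) o x) = act h (g • o) (act g o x)
  act_incl : ∀ (g : G) ⦃a o : K⦄ (hao : a ≤ o) (x : N.fib a),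
      act g o (N.incl hao x) = N.incl (hord g a o hao) (act g a x)

/-- A `G`-invariant state of a `G`-covariant net. -/
def NetState.Invariant {G : Type w} [Group G] [MulAction G K]
    {hord : ∀ (g : G) (a b : K), a ≤ b → g • a ≤ g • b} {N : CStarNet.{u, v} K}
    (α : CovariantNet hord N) (ω : NetState N) : Prop :=
  ∀ (g : G) (o : K) (x : N.fib o), (ω.st (g • o)).lin (α.act g o x) = (ω.st o).lin x

/-! ### The generalized Čech cocycle -/

/-- A 1-simplex of the simplicial set `Σ°_*(K)`: two vertices and a nonempty support
`F` lying below both of them. -/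
structure CechSimplex1 (K : Type u) [PartialOrder K] : Type u where
  F : Set K
  hne : F.Nonempty
  src : K
  tgt : K
  hsrc : ∀ a ∈ F, a ≤ src
  htgt : ∀ a ∈ F, a ≤ tgt

def CechSimplex1.swap (s : CechSimplex1 K) : CechSimplex1 K :=
  ⟨s.F, s.hne, s.tgt, s.src, s.htgt, s.hsrc⟩

/-- `A^F_o`: the C*-subalgebra of the fibre over `o` generated by the images of the
fibres over the elements of `F`. -/
def CStarNet.fibGen (N : CStarNet.{u, v} K) (F : Set K) (o : K) (hF : ∀ a ∈ F, a ≤ o) :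
    StarSubalgebra ℂ (N.fib o) :=
  (StarAlgebra.adjoin ℂ (⋃ a, ⋃ h : a ∈ F, Set.range (N.incl (hF a h)))).topologicalClosure

theorem CStarNet.mem_fibGen (N : CStarNet.{u, v} K) {F : Set K} {o : K}
    (hF : ∀ a ∈ F, a ≤ o) {a : K} (ha : a ∈ F) (x : N.fib a) :
    N.incl (hF a ha) x ∈ N.fibGen F o hF :=
  StarSubalgebra.le_topologicalClosure _
    (StarAlgebra.subset_adjoin ℂ _
      (Set.mem_iUnion.2 ⟨a, Set.mem_iUnion.2 ⟨ha, Set.mem_range_self x⟩⟩))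

/-- A generalized Čech cocycle of the net `N` defined over the collection `D` of
1-simplices of `Σ°_*(K)`. -/
structure CechCocycle (N : CStarNet.{u, v} K) (D : Set (CechSimplex1 K)) where
  zeta : ∀ s ∈ D, (N.fibGen s.F s.src s.hsrc ≃⋆ₐ[ℂ] N.fibGen s.F s.tgt s.htgt)
  compat : ∀ (s : CechSimplex1 K) (hs : s ∈ D) ⦃a : K⦄ (ha : a ∈ s.F) (x : N.fib a),
      (zeta s hs ⟨N.incl (s.hsrc a ha) x, N.mem_fibGen s.hsrc ha x⟩ : N.fib s.tgt)
        = N.incl (s.htgt a ha) x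

/-- The domain of the Čech cocycle of a net: the union of all the domains over which
a Čech cocycle of the net exists. -/
def CechDomain (N : CStarNet.{u, v} K) : Set (CechSimplex1 K) :=
  {s | ∃ D : Set (CechSimplex1 K), Nonempty (CechCocycle N D) ∧ s ∈ D}


/-- A representation of a C*-net bundle and a covariant representation of its holonomy
dynamical system correspond to each other. -/
def MatchesCov {N : CStarNet.{u, v} K} {hN : IsCStarNetBundle N} {o : K}
    (R : NetRep.{u, v, w} N) (C : CovRep.{u, v, w'} N hN o) : Prop :=
  ∃ W : R.H o ≃ₗᵢ[ℂ] C.H,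
    (∀ (x : N.fib o) (v : R.H o), W (R.rep o x v) = C.eta x (W v)) ∧
    (∀ (p : SPath K o o) (v : R.H o), W (R.Upath p v) = C.V p (W v))


set_option linter.dupNamespace false

section Aux

variable {K : Type u} [PartialOrder K]

namespace SPath

theorem Homotopic.cancel_right {a b c : K} (u : SPath K a b) (v : SPath K c b) :
    Homotopic ((u.comp v.reverse).comp v) u := by
  rw [comp_assoc]
  have h := Homotopic.comp_congr (Homotopic.refl u) (reverse_comp_self v)
  simpa using h

theorem single_comp_nerve (s : Simplex1 K) :
    Homotopic ((single s rfl rfl).comp (nervePath s.le0)) (nervePath s.le1) :=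
  Homotopic.triangle
    (⟨s.supp, ⟨s.supp, s.supp, s.d0, le_rfl, s.le0⟩,
      ⟨s.supp, s.supp, s.d1, le_rfl, s.le1⟩, s, le_rfl, le_rfl, le_rfl,
      rfl, rfl, rfl⟩ : Simplex2 K) rfl rfl

theorem nerve_comp {a b c : K} (h1 : a ≤ b) (h2 : b ≤ c) :
    Homotopic ((nervePath h1).comp (nervePath h2)) (nervePath (h1.trans h2)) :=
  Homotopic.triangle
    (⟨c, ⟨c, c, b, le_rfl, h2⟩, ⟨c, c, a, le_rfl, h1.trans h2⟩,
      ⟨b, b, a, le_rfl, h1⟩, le_rfl, le_rfl, h2, rfl, rfl, rfl⟩ : Simplex2 K) rfl rfl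

end SPath

namespace CStarNet

variable (N : CStarNet.{u, v} K)

theorem incl_le_rfl {a : K} (h : a ≤ a) (x : N.fib a) : N.incl h x = x :=
  N.incl_injective h (N.incl_comp h h x)

@[simp] theorem fibCast_eq_self {a : K} (h : a = a) (x : N.fib a) : N.fibCast h x = x := rfl

variable (hN : IsCStarNetBundle N)

theorem hol1_apply (s : Simplex1 K) (x : N.fib s.d1) :
    N.hol1 hN s x = (N.holEquiv hN s.le0).symm (N.incl s.le1 x) := rfl

theorem holEquiv_symm_le_rfl {a : K} (h : a ≤ a) (z : N.fib a) :
    (N.holEquiv hN h).symm z = z := by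
  apply (hN h).injective
  show N.incl h _ = N.incl h z
  have : N.holEquiv hN h ((N.holEquiv hN h).symm z) = z := (N.holEquiv hN h).apply_symm_apply z
  calc N.incl h ((N.holEquiv hN h).symm z) = z := this
    _ = N.incl h z := (N.incl_le_rfl h z).symm

theorem incl_holEquiv_symm {a b : K} (h : a ≤ b) (z : N.fib b) :
    N.incl h ((N.holEquiv hN h).symm z) = z :=
  (N.holEquiv hN h).apply_symm_apply z

theorem hol1_incl (s : Simplex1 K) (x : N.fib s.d1) :
    N.incl s.le0 (N.hol1 hN s x) = N.incl s.le1 x :=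
  N.incl_holEquiv_symm hN s.le0 (N.incl s.le1 x)

theorem incl_hol1_top (s : Simplex1 K) {o' : K} (hs : s.supp ≤ o')
    (h0 : s.d0 ≤ o') (h1 : s.d1 ≤ o') (x : N.fib s.d1) :
    N.incl h0 (N.hol1 hN s x) = N.incl h1 x := by
  have e := congrArg (N.incl hs) (N.hol1_incl hN s x)
  rw [N.incl_comp s.le0 hs, N.incl_comp s.le1 hs] at e
  exact e

theorem holPath_comp {a b c : K} (p : SPath K a b) (q : SPath K b c) (x : N.fib a) :
    N.holPath hN (p.comp q) x = N.holPath hN q (N.holPath hN p x) := by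
  induction q with
  | nil => rfl
  | cons q s h1 h0 ih =>
      simp only [SPath.comp, CStarNet.holPath, StarAlgEquiv.trans_apply, ih]

theorem holPath_single {a b : K} (s : Simplex1 K) (h1 : s.d1 = a) (h0 : s.d0 = b)
    (x : N.fib a) :
    N.holPath hN (SPath.single s h1 h0) x =
      N.fibCast h0 (N.hol1 hN s (N.fibCast h1.symm x)) := rfl

theorem holPath_nerve {a b : K} (h : a ≤ b) (x : N.fib a) :
    N.holPath hN (SPath.nervePath h) x = N.incl h x := by
  have : N.holPath hN (SPath.nervePath h) x =
      N.hol1 hN ⟨b, b, a, le_rfl, h⟩ x := by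
    simp only [SPath.nervePath, N.holPath_single hN, fibCast_eq_self]
  rw [this, N.hol1_apply hN]
  show (N.holEquiv hN (le_refl b)).symm (N.incl h x) = _
  rw [N.holEquiv_symm_le_rfl hN]

theorem holPath_homotopic {a b : K} {p q : SPath K a b} (h : SPath.Homotopic p q) :
    ∀ x : N.fib a, N.holPath hN p x = N.holPath hN q x := by
  induction h with
  | refl p => intro x; rfl
  | symm _ ih => intro x; exact (ih x).symm
  | trans _ _ ih1 ih2 => intro x; exact (ih1 x).trans (ih2 x)
  | comp_congr _ _ ih1 ih2 =>
      intro x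
      rw [N.holPath_comp hN, N.holPath_comp hN, ih1, ih2]
  | degen s h0 h1 hs =>
      obtain ⟨ss, s0, s1, l0, l1⟩ := s
      dsimp at h0 h1 hs
      subst h0; subst h1; subst hs
      intro x
      simp only [SPath.single, CStarNet.holPath, StarAlgEquiv.trans_apply, fibCast_eq_self,
        N.hol1_apply hN]
      show x = (N.holEquiv hN l0).symm (N.incl l1 _)
      rw [N.incl_le_rfl, N.holEquiv_symm_le_rfl hN]
      rfl
  | triangle c h1 h0 =>
      obtain ⟨csupp, ⟨s0, a00, a01, l00, l01⟩, ⟨s1, a10, a11, l10, l11⟩,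
        ⟨s2, a20, a21, l20, l21⟩, le0, le1, le2, h00, h11, h10⟩ := c
      dsimp at h1 h0 h00 h11 h10
      subst h1; subst h0; subst h00; subst h11; subst h10
      intro x
      rw [N.holPath_comp hN]
      simp only [N.holPath_single hN, fibCast_eq_self]
      apply N.incl_injective (l10.trans le1)
      have e1 := N.incl_hol1_top hN ⟨s0, a00, a01, l00, l01⟩ le0
        (l00.trans le0) (l01.trans le0) (N.hol1 hN ⟨s2, a01, a11, l20, l21⟩ x)
      have e2 := N.incl_hol1_top hN ⟨s2, a01, a11, l20, l21⟩ le2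
        (l20.trans le2) (l21.trans le2) x
      have e3 := N.incl_hol1_top hN ⟨s1, a00, a11, l10, l11⟩ le1
        (l10.trans le1) (l11.trans le1) x
      exact e1.trans (e2.trans e3.symm)

end CStarNet

end Aux

section Aux2

variable {K : Type u} [PartialOrder K]
variable {N : CStarNet.{u, v} K} {M : CStarNet.{u, v} K}
variable (hN : IsCStarNetBundle N) (hM : IsCStarNetBundle M)

theorem morph_hol1 (φ : ∀ a, N.fib a →⋆ₐ[ℂ] M.fib a) (hφ : IsNetMorphismOver N M φ)
    (s : Simplex1 K) (y : N.fib s.d1) :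
    φ s.d0 (N.hol1 hN s y) = M.hol1 hM s (φ s.d1 y) := by
  apply M.incl_injective s.le0
  rw [← hφ s.le0, N.hol1_incl hN, hφ s.le1, M.hol1_incl hM]

theorem morph_holPath (φ : ∀ a, N.fib a →⋆ₐ[ℂ] M.fib a) (hφ : IsNetMorphismOver N M φ)
    {a b : K} (q : SPath K a b) (x : N.fib a) :
    φ b (N.holPath hN q x) = M.holPath hM q (φ a x) := by
  induction q with
  | nil => rfl
  | cons q s h1 h0 ih =>
      subst h1; subst h0
      simp only [CStarNet.holPath, StarAlgEquiv.trans_apply, CStarNet.fibCast_eq_self]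
      rw [morph_hol1 hN hM φ hφ s, ih]

include hN hM in
theorem morph_unique (hconn : ∀ a b : K, Nonempty (SPath K a b)) (o : K)
    (φ ψ : ∀ a, N.fib a →⋆ₐ[ℂ] M.fib a)
    (hφ : IsNetMorphismOver N M φ) (hψ : IsNetMorphismOver N M ψ)
    (h : φ o = ψ o) : ∀ a, φ a = ψ a := by
  intro a
  apply StarAlgHom.ext
  intro x
  obtain ⟨q⟩ := hconn o a
  obtain ⟨y, rfl⟩ : ∃ y, N.holPath hN q y = x :=
    ⟨(N.holPath hN q).symm x, (N.holPath hN q).apply_symm_apply x⟩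
  rw [morph_holPath hN hM φ hφ, morph_holPath hN hM ψ hψ, h]

theorem morph_exists (hconn : ∀ a b : K, Nonempty (SPath K a b)) (o : K)
    (η : N.fib o →⋆ₐ[ℂ] M.fib o)
    (hη : ∀ (p : SPath K o o) (x : N.fib o), η (N.holPath hN p x) = M.holPath hM p (η x)) :
    ∃ φ : ∀ a, N.fib a →⋆ₐ[ℂ] M.fib a, IsNetMorphismOver N M φ ∧ φ o = η := by
  classical
  let P : ∀ a, SPath K o a := fun a => (hconn o a).some
  refine ⟨fun a => ((M.holPath hM (P a) : M.fib o →⋆ₐ[ℂ] M.fib a).comp η).comp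
      ((N.holPath hN (P a)).symm : N.fib a →⋆ₐ[ℂ] N.fib o), ?_, ?_⟩
  · intro a b h x
    simp only [StarAlgHom.comp_apply]
    set y := (N.holPath hN (P a)).symm x with hy
    have hx : N.holPath hN (P a) y = x := (N.holPath hN (P a)).apply_symm_apply x
    set ℓ : SPath K o o := ((P a).comp (SPath.nervePath h)).comp (P b).reverse with hℓ
    have hcan : SPath.Homotopic (ℓ.comp (P b)) ((P a).comp (SPath.nervePath h)) :=
      SPath.Homotopic.cancel_right _ _
    have claim1 : (N.holPath hN (P b)).symm (N.incl h x) = N.holPath hN ℓ y := by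
      apply EquivLike.injective (N.holPath hN (P b))
      rw [(N.holPath hN (P b)).apply_symm_apply]
      show N.incl h x = N.holPath hN (P b) (N.holPath hN ℓ y)
      rw [← N.holPath_comp hN, N.holPath_homotopic hN hcan, N.holPath_comp hN, hx,
        N.holPath_nerve hN]
    show (M.holPath hM (P b)) (η ((N.holPath hN (P b)).symm (N.incl h x)))
        = M.incl h ((M.holPath hM (P a)) (η y))
    rw [claim1, hη, ← M.holPath_comp hM, M.holPath_homotopic hM hcan, M.holPath_comp hM,
      M.holPath_nerve hM]
  · apply StarAlgHom.ext
    intro x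
    simp only [StarAlgHom.comp_apply]
    show (M.holPath hM (P o)) (η ((N.holPath hN (P o)).symm x)) = η x
    have : η ((N.holPath hN (P o)).symm x) = (M.holPath hM (P o)).symm (η x) := by
      apply EquivLike.injective (M.holPath hM (P o))
      rw [(M.holPath hM (P o)).apply_symm_apply, ← hη, (N.holPath hN (P o)).apply_symm_apply]
    rw [this, (M.holPath hM (P o)).apply_symm_apply]

end Aux2

section EssSurj

variable {K : Type u} [PartialOrder K]

namespace SPath

theorem Homotopic.rev_self_comp {a b c : K} (v : SPath K a b) (w : SPath K b c) :
    Homotopic (v.reverse.comp (v.comp w)) w := by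
  rw [← comp_assoc]
  have h := Homotopic.comp_congr (reverse_comp_self v) (Homotopic.refl w)
  rwa [nil_comp] at h

end SPath

variable (hconn : ∀ a b : K, Nonempty (SPath K a b)) (o : K)

/-- A choice of a path from the base point to every element. -/
def chosen (a : K) : SPath K o a := (hconn o a).some

/-- The homotopy class of the loop at `o` obtained by conjugating a path with the
chosen paths to its endpoints. -/
def cls {a b : K} (q : SPath K a b) : Pi1 K o :=
  Pi1.mk (((chosen hconn o a).comp q).comp (chosen hconn o b).reverse)

theorem cls_congr {a b : K} {p q : SPath K a b} (h : SPath.Homotopic p q) :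
    cls hconn o p = cls hconn o q :=
  Quotient.sound (SPath.Homotopic.comp_congr
    (SPath.Homotopic.comp_congr (SPath.Homotopic.refl _) h) (SPath.Homotopic.refl _))

theorem cls_nil (a : K) : cls hconn o (SPath.nil a) = 1 :=
  Quotient.sound (SPath.comp_reverse_self (chosen hconn o a))

theorem cls_comp {a b c : K} (p : SPath K a b) (q : SPath K b c) :
    cls hconn o (p.comp q) = cls hconn o q * cls hconn o p := by
  refine (Quotient.sound ?_).symm
  show SPath.Homotopic
    ((((chosen hconn o a).comp p).comp (chosen hconn o b).reverse).comp
      (((chosen hconn o b).comp q).comp (chosen hconn o c).reverse))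
    (((chosen hconn o a).comp (p.comp q)).comp (chosen hconn o c).reverse)
  have e1 : (((chosen hconn o a).comp p).comp (chosen hconn o b).reverse).comp
      (((chosen hconn o b).comp q).comp (chosen hconn o c).reverse)
      = (chosen hconn o a).comp (p.comp ((chosen hconn o b).reverse.comp
        ((chosen hconn o b).comp (q.comp (chosen hconn o c).reverse)))) := by
    simp only [SPath.comp_assoc]
  have e2 : ((chosen hconn o a).comp (p.comp q)).comp (chosen hconn o c).reverse
      = (chosen hconn o a).comp (p.comp (q.comp (chosen hconn o c).reverse)) := by
    simp only [SPath.comp_assoc]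
  rw [e1, e2]
  exact SPath.Homotopic.comp_congr (SPath.Homotopic.refl _)
    (SPath.Homotopic.comp_congr (SPath.Homotopic.refl _)
      (SPath.Homotopic.rev_self_comp _ _))

theorem cls_single (s : Simplex1 K) :
    cls hconn o (SPath.single s rfl rfl)
      = (cls hconn o (SPath.nervePath s.le0))⁻¹ * cls hconn o (SPath.nervePath s.le1) := by
  rw [eq_inv_mul_iff_mul_eq, ← cls_comp]
  exact cls_congr hconn o (SPath.single_comp_nerve s)

theorem cls_nerve_trans {a b c : K} (h1 : a ≤ b) (h2 : b ≤ c) :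
    cls hconn o (SPath.nervePath (h1.trans h2))
      = cls hconn o (SPath.nervePath h2) * cls hconn o (SPath.nervePath h1) := by
  rw [← cls_comp]
  exact (cls_congr hconn o (SPath.nerve_comp h1 h2)).symm

variable (R : Type v) [CStarAlgebra R] (α : Pi1 K o → (R ≃⋆ₐ[ℂ] R))
variable (hα : ∀ (x y : Pi1 K o) (r : R), α (x * y) r = α x (α y r))

include hα in
theorem alpha_one (r : R) : α 1 r = r := by
  have h := hα 1 1 r
  rw [one_mul] at h
  exact (EquivLike.injective (α 1) h).symm

include hα in
theorem alpha_inv (g : Pi1 K o) (r : R) : α g⁻¹ (α g r) = r := by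
  rw [← hα, inv_mul_cancel, alpha_one o R α hα]

/-- The C*-net bundle constructed from a C*-dynamical system over `π₁ᵒ(K)`. -/
def mkNet : CStarNet.{u, v} K where
  fib _ := R
  incl _ _ h := ((α (cls hconn o (SPath.nervePath h))) : R →⋆ₐ[ℂ] R)
  incl_injective _ _ h := EquivLike.injective (α (cls hconn o (SPath.nervePath h)))
  incl_comp := by
    intro e a b h1 h2 x
    show α (cls hconn o (SPath.nervePath h2)) (α (cls hconn o (SPath.nervePath h1)) x)
      = α (cls hconn o (SPath.nervePath (h1.trans h2))) x
    rw [← hα, ← cls_nerve_trans]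

theorem mkNet_bundle : IsCStarNetBundle (mkNet hconn o R α hα) :=
  fun _ _ h => EquivLike.bijective (α (cls hconn o (SPath.nervePath h)))

theorem mkNet_incl {a b : K} (h : a ≤ b) (x : R) :
    (mkNet hconn o R α hα).incl h x = α (cls hconn o (SPath.nervePath h)) x := rfl

theorem mkNet_holEquiv_symm {a b : K} (h : a ≤ b) (z : R) :
    ((mkNet hconn o R α hα).holEquiv (mkNet_bundle hconn o R α hα) h).symm z
      = α (cls hconn o (SPath.nervePath h))⁻¹ z := by
  apply EquivLike.injective ((mkNet hconn o R α hα).holEquiv (mkNet_bundle hconn o R α hα) h)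
  erw [StarAlgEquiv.apply_symm_apply]
  show z = α (cls hconn o (SPath.nervePath h)) (α (cls hconn o (SPath.nervePath h))⁻¹ z)
  rw [← hα, mul_inv_cancel, alpha_one o R α hα]

theorem mkNet_holPath {a b : K} (q : SPath K a b) (x : R) :
    (mkNet hconn o R α hα).holPath (mkNet_bundle hconn o R α hα) q x
      = α (cls hconn o q) x := by
  induction q with
  | nil => rw [cls_nil]; exact (alpha_one o R α hα x).symm
  | cons q s h1 h0 ih =>
      subst h1; subst h0
      simp only [CStarNet.holPath, StarAlgEquiv.trans_apply, CStarNet.fibCast_eq_self]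
      erw [CStarNet.hol1_apply, mkNet_holEquiv_symm hconn o R α hα, mkNet_incl, ih]
      rw [← hα, ← hα]
      congr 1
      have hc : cls hconn o (SPath.cons q s rfl rfl)
          = cls hconn o (q.comp (SPath.single s rfl rfl)) := rfl
      rw [hc, cls_comp, cls_single, mul_assoc]

end EssSurj

/-- the correspondence sending a C*-net bundle to its holonomy dynamical
system is bijective up to isomorphism, and gives an equivalence between the category of
C*-net bundles over `K` and the category of C*-dynamical systems with group `π₁ᵒ(K)`:
it is essentially surjective, maps morphisms to equivariant morphisms, and is fully
faithful; moreover isomorphisms of holonomy dynamical systems lift to isomorphisms of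
net bundles. -/
theorem statement_2 {K : Type u} [PartialOrder K]
    (hconn : ∀ a b : K, Nonempty (SPath K a b)) (o : K) :
    -- essential surjectivity
    (∀ (R : Type v) [CStarAlgebra R] (α : Pi1 K o → (R ≃⋆ₐ[ℂ] R)),
       (∀ (x y : Pi1 K o) (r : R), α (x * y) r = α x (α y r)) →
       ∃ (N : CStarNet.{u, v} K) (hN : IsCStarNetBundle N) (e : N.fib o ≃⋆ₐ[ℂ] R),
         ∀ (p : SPath K o o) (x : N.fib o), e (N.holPath hN p x) = α (Pi1.mk p) (e x)) ∧
    -- fully faithful on morphisms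
    (∀ (N M : CStarNet.{u, v} K) (hN : IsCStarNetBundle N) (hM : IsCStarNetBundle M),
       (∀ (φ : ∀ a, N.fib a →⋆ₐ[ℂ] M.fib a), IsNetMorphismOver N M φ →
          ∀ (p : SPath K o o) (x : N.fib o),
            φ o (N.holPath hN p x) = M.holPath hM p (φ o x)) ∧
       (∀ (φ ψ : ∀ a, N.fib a →⋆ₐ[ℂ] M.fib a),
          IsNetMorphismOver N M φ → IsNetMorphismOver N M ψ →
          φ o = ψ o → ∀ a, φ a = ψ a) ∧
       (∀ η : N.fib o →⋆ₐ[ℂ] M.fib o,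
          (∀ (p : SPath K o o) (x : N.fib o), η (N.holPath hN p x) = M.holPath hM p (η x)) →
          ∃ φ : ∀ a, N.fib a →⋆ₐ[ℂ] M.fib a, IsNetMorphismOver N M φ ∧ φ o = η)) ∧
    -- isomorphic holonomy dynamical systems give isomorphic net bundles
    (∀ (N M : CStarNet.{u, v} K) (hN : IsCStarNetBundle N) (hM : IsCStarNetBundle M)
       (e : N.fib o ≃⋆ₐ[ℂ] M.fib o),
       (∀ (p : SPath K o o) (x : N.fib o), e (N.holPath hN p x) = M.holPath hM p (e x)) →
       ∃ φ : ∀ a, N.fib a ≃⋆ₐ[ℂ] M.fib a,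
         (∀ ⦃a b : K⦄ (h : a ≤ b) (x : N.fib a), φ b (N.incl h x) = M.incl h (φ a x)) ∧
         φ o = e) := by
  refine ⟨?_, ?_, ?_⟩
  · -- essential surjectivity
    intro R _ α hα
    refine ⟨mkNet hconn o R α hα, mkNet_bundle hconn o R α hα,
      α (Pi1.mk (chosen hconn o o)), ?_⟩
    intro p x
    erw [mkNet_holPath hconn o R α hα]
    have hc : Pi1.mk (chosen hconn o o) * cls hconn o p
        = Pi1.mk p * Pi1.mk (chosen hconn o o) := by
      have h0 : cls hconn o p
          = (Pi1.mk (chosen hconn o o))⁻¹ * (Pi1.mk p * Pi1.mk (chosen hconn o o)) := rfl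
      rw [h0, mul_inv_cancel_left]
    exact (hα _ _ x).symm.trans ((congrArg (fun g => α g x) hc).trans (hα _ _ x))
  · -- fully faithful
    intro N M hN hM
    exact ⟨fun φ hφ p x => morph_holPath hN hM φ hφ p x,
      fun φ ψ hφ hψ h => morph_unique hN hM hconn o φ ψ hφ hψ h,
      fun η hη => morph_exists hN hM hconn o η hη⟩
  · -- isomorphisms lift
    intro N M hN hM e he
    have he' : ∀ (p : SPath K o o) (x : M.fib o),
        e.symm (M.holPath hM p x) = N.holPath hN p (e.symm x) := by
      intro p x
      apply EquivLike.injective e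
      rw [StarAlgEquiv.apply_symm_apply, he, StarAlgEquiv.apply_symm_apply]
    obtain ⟨φ, hφ, hφo⟩ := morph_exists hN hM hconn o (e : N.fib o →⋆ₐ[ℂ] M.fib o)
      (fun p x => he p x)
    obtain ⟨ψ, hψ, hψo⟩ := morph_exists hM hN hconn o (e.symm : M.fib o →⋆ₐ[ℂ] N.fib o)
      (fun p x => he' p x)
    have hχ : IsNetMorphismOver M M (fun a => (φ a).comp (ψ a)) := by
      intro a b h x
      simp only [StarAlgHom.comp_apply]
      rw [hψ h x, hφ h]
    have hξ : IsNetMorphismOver N N (fun a => (ψ a).comp (φ a)) := by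
      intro a b h x
      simp only [StarAlgHom.comp_apply]
      rw [hφ h x, hψ h]
    have hidM : IsNetMorphismOver M M (fun a => StarAlgHom.id ℂ (M.fib a)) :=
      fun a b h x => rfl
    have hidN : IsNetMorphismOver N N (fun a => StarAlgHom.id ℂ (N.fib a)) :=
      fun a b h x => rfl
    have hχo : (φ o).comp (ψ o) = StarAlgHom.id ℂ (M.fib o) := by
      apply StarAlgHom.ext; intro x
      show φ o (ψ o x) = x
      rw [hφo, hψo]
      exact e.apply_symm_apply x
    have hξo : (ψ o).comp (φ o) = StarAlgHom.id ℂ (N.fib o) := by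
      apply StarAlgHom.ext; intro x
      show ψ o (φ o x) = x
      rw [hψo, hφo]
      exact e.symm_apply_apply x
    have hMall := morph_unique hM hM hconn o _ _ hχ hidM hχo
    have hNall := morph_unique hN hN hconn o _ _ hξ hidN hξo
    have li : ∀ a, Function.LeftInverse (ψ a) (φ a) :=
      fun a x => DFunLike.congr_fun (hNall a) x
    have ri : ∀ a, Function.RightInverse (ψ a) (φ a) :=
      fun a x => DFunLike.congr_fun (hMall a) x
    refine ⟨fun a => StarAlgEquiv.ofBijective (φ a) ⟨(li a).injective, (ri a).surjective⟩,
      ?_, ?_⟩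
    · intro a b h x
      exact hφ h x
    · apply StarAlgEquiv.ext; intro x
      exact DFunLike.congr_fun hφo x

end AQFT
end
end

section
/- If K is a simply connected poset, then every C*-net bundle over K is trivial, i.e. isomorphic to a constant net bundle. -/
noncomputable section

universe u v w u' v' w' u'' v'' w''

namespace AQFT

/-! ### Nets of C*-algebras over a poset -/

open scoped ComplexOrder

variable {K : Type u} [PartialOrder K]

section Aux

variable {N : CStarNet.{u, v} K}

theorem CStarNet.incl_le_rfl_s3 (N : CStarNet.{u, v} K) (a : K) (x : N.fib a) :
    N.incl (le_rfl : a ≤ a) x = x := by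
  apply N.incl_injective (le_rfl : a ≤ a)
  rw [N.incl_comp le_rfl le_rfl x]

theorem CStarNet.incl_hol1 (N : CStarNet.{u, v} K) (hN : IsCStarNetBundle N) (s : Simplex1 K)
    (x : N.fib s.d1) : N.incl s.le0 (N.hol1 hN s x) = N.incl s.le1 x := by
  show N.holEquiv hN s.le0 ((N.holEquiv hN s.le0).symm (N.holEquiv hN s.le1 x)) = _
  rw [StarAlgEquiv.apply_symm_apply]
  rfl

theorem CStarNet.incl_trans_hol1 (N : CStarNet.{u, v} K) (hN : IsCStarNetBundle N)
    (s : Simplex1 K) {o : K} (h : s.supp ≤ o) (x : N.fib s.d1) :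
    N.incl (s.le0.trans h) (N.hol1 hN s x) = N.incl (s.le1.trans h) x := by
  rw [← N.incl_comp s.le0 h, N.incl_hol1 hN s x, N.incl_comp s.le1 h]

theorem CStarNet.fibCast_self (N : CStarNet.{u, v} K) {a : K} (h : a = a) (x : N.fib a) :
    N.fibCast h x = x := rfl

theorem CStarNet.holPath_single_s3 (hN : IsCStarNetBundle N) {a b : K} (s : Simplex1 K)
    (h1 : s.d1 = a) (h0 : s.d0 = b) (x : N.fib a) :
    N.holPath hN (SPath.single s h1 h0) x
      = N.fibCast h0 (N.hol1 hN s (N.fibCast h1.symm x)) := rfl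

theorem CStarNet.holPath_comp_s3 (hN : IsCStarNetBundle N) {a b c : K}
    (p : SPath K a b) (q : SPath K b c) (x : N.fib a) :
    N.holPath hN (p.comp q) x = N.holPath hN q (N.holPath hN p x) := by
  induction q with
  | nil => rfl
  | cons q s h1 h0 ih =>
      show (((N.fibCast h1.symm).trans (N.hol1 hN s)).trans (N.fibCast h0))
          (N.holPath hN (p.comp q) x) = _
      rw [ih]
      rfl

theorem CStarNet.holPath_congr (hN : IsCStarNetBundle N) {a b : K} {p q : SPath K a b}
    (h : SPath.Homotopic p q) : ∀ x : N.fib a, N.holPath hN p x = N.holPath hN q x := by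
  induction h with
  | refl p => intro x; rfl
  | symm _ ih => intro x; exact (ih x).symm
  | trans _ _ ih1 ih2 => intro x; exact (ih1 x).trans (ih2 x)
  | comp_congr _ _ ih1 ih2 =>
      intro x
      rw [CStarNet.holPath_comp_s3, CStarNet.holPath_comp_s3, ih1, ih2]
  | degen s h0 h1 hs =>
      intro x
      obtain ⟨su, d0, d1, le0, le1⟩ := s
      dsimp at h0 h1 hs
      subst h0; subst h1; subst hs
      rw [CStarNet.holPath_single_s3 hN, N.fibCast_self, N.fibCast_self]
      apply N.incl_injective le0
      rw [N.incl_hol1 hN ⟨su, su, su, le0, le1⟩ x]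
      rfl
  | triangle c h1 h0 =>
      intro x
      obtain ⟨su, d0, d1, d2, cle0, cle1, cle2, h00, h11, h10⟩ := c
      obtain ⟨s0, a00, a01, b00, b01⟩ := d0
      obtain ⟨s1, a10, a11, b10, b11⟩ := d1
      obtain ⟨s2, a20, a21, b20, b21⟩ := d2
      dsimp at h00 h11 h10 h1 h0 cle0 cle1 cle2
      subst h00; subst h11; subst h10; subst h1; subst h0
      rw [CStarNet.holPath_comp_s3 hN, CStarNet.holPath_single_s3 hN, CStarNet.holPath_single_s3 hN,
        CStarNet.holPath_single_s3 hN]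
      simp only [N.fibCast_self]
      apply N.incl_injective (b00.trans cle0)
      rw [N.incl_trans_hol1 hN ⟨s0, _, _, b00, b01⟩ cle0,
        N.incl_trans_hol1 hN ⟨s1, _, _, b10, b11⟩ cle1]
      rw [show (N.incl (Trans.trans b01 cle0) : N.fib _ →⋆ₐ[ℂ] N.fib su) =
        N.incl (Trans.trans b20 cle2) from rfl]
      rw [N.incl_trans_hol1 hN ⟨s2, _, _, b20, b21⟩ cle2]

theorem SPath.homotopic_of_sc {K : Type u} [PartialOrder K]
    (hsc : ∀ (o : K) (p : SPath K o o), SPath.Homotopic p (SPath.nil o))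
    {a b : K} (p q : SPath K a b) : SPath.Homotopic p q := by
  have e1 : SPath.Homotopic p (p.comp (q.reverse.comp q)) := by
    have := SPath.Homotopic.comp_congr (SPath.Homotopic.refl p)
      (SPath.reverse_comp_self q).symm
    rwa [SPath.comp_nil] at this
  have e2 : SPath.Homotopic ((p.comp q.reverse).comp q) q := by
    have := SPath.Homotopic.comp_congr (hsc a (p.comp q.reverse)) (SPath.Homotopic.refl q)
    rwa [SPath.nil_comp] at this
  rw [SPath.comp_assoc] at e2
  exact e1.trans e2

theorem CStarNet.holPath_nerve_s3 (hN : IsCStarNetBundle N) {a o : K} (h : a ≤ o)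
    (x : N.fib a) : N.holPath hN (SPath.nervePath h) x = N.incl h x := by
  rw [SPath.nervePath, CStarNet.holPath_single_s3 hN, N.fibCast_self, N.fibCast_self]
  apply N.incl_injective (le_rfl : o ≤ o)
  rw [N.incl_hol1 hN ⟨o, o, a, le_rfl, h⟩ x, N.incl_le_rfl_s3]

end Aux

/-- over a simply connected poset every C*-net bundle is trivial. -/
theorem statement_3 {K : Type u} [PartialOrder K]
    (hconn : ∀ a b : K, Nonempty (SPath K a b))
    (hsc : ∀ (o : K) (p : SPath K o o), SPath.Homotopic p (SPath.nil o))
    (N : CStarNet.{u, v} K) (hN : IsCStarNetBundle N) :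
    IsTrivialNet N := by
  intro o₀
  have pth : ∀ a : K, SPath K a o₀ := fun a => (hconn a o₀).some
  refine ⟨fun a => N.holPath hN (pth a), ?_⟩
  intro a o h x
  have hh : SPath.Homotopic (pth a) ((SPath.nervePath h).comp (pth o)) :=
    SPath.homotopic_of_sc hsc _ _
  rw [N.holPath_congr hN hh x, N.holPath_comp_s3 hN, N.holPath_nerve_s3 hN h x]

end AQFT
end
end
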